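/- arXiv:2004.14157 — 2 statements merged into one kernel-verified Lean document; each statement's English description precedes it below -/
import Mathlib

section
/- Weak Kodaira decomposition: let H be a complex Hilbert space and d a closed densely defined operator on H with range(d) ⊆ ker(d) (so that d∘d = 0 where defined). Then H decomposes as the orthogonal direct sum H = (ker d ∩ ker d*) ⊕ closure(range d) ⊕ closure(range d*). -/
open Submodule

local notation "⟪" x ", " y "⟫" => @inner ℂ _ _ x y

private lemma orth_topClosure {H : Type*} [NormedAddCommGroup H] [InnerProductSpace ℂ H]
    [CompleteSpace H] (U : Submodule ℂ H) : U.topologicalClosureᗮ = Uᗮ := by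
  rw [← Submodule.orthogonal_orthogonal_eq_closure, Submodule.triorthogonal_eq_orthogonal]

set_option maxHeartbeats 1000000 in
/-- Weak Kodaira decomposition: for a closed densely defined operator `d` on a
complex Hilbert space `H` with `range d ⊆ ker d`, the space decomposes as the
orthogonal direct sum
`H = (ker d ∩ ker d*) ⊕ closure(range d) ⊕ closure(range d*)`. -/
theorem weak_kodaira_decomposition
    {H : Type*} [NormedAddCommGroup H] [InnerProductSpace ℂ H] [CompleteSpace H]
    (d : H →ₗ.[ℂ] H) (hdense : Dense (d.domain : Set H)) (hclosed : d.IsClosed)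
    (hrange : LinearMap.range d.toFun ≤
      (LinearMap.ker d.toFun).map d.domain.subtype) :
    -- the three pieces
    letI K : Submodule ℂ H := (LinearMap.ker d.toFun).map d.domain.subtype
    letI Kstar : Submodule ℂ H :=
      (LinearMap.ker d.adjoint.toFun).map d.adjoint.domain.subtype
    letI R : Submodule ℂ H := (LinearMap.range d.toFun).topologicalClosure
    letI Rstar : Submodule ℂ H := (LinearMap.range d.adjoint.toFun).topologicalClosure
    (K ⊓ Kstar) ⟂ R ∧ (K ⊓ Kstar) ⟂ Rstar ∧ R ⟂ Rstar ∧
      (K ⊓ Kstar) ⊔ R ⊔ Rstar = ⊤ := by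
  set K : Submodule ℂ H := (LinearMap.ker d.toFun).map d.domain.subtype with hK
  set Kstar : Submodule ℂ H :=
    (LinearMap.ker d.adjoint.toFun).map d.adjoint.domain.subtype with hKstar
  set R : Submodule ℂ H := (LinearMap.range d.toFun).topologicalClosure with hR
  set Rstar : Submodule ℂ H :=
    (LinearMap.range d.adjoint.toFun).topologicalClosure with hRstar
  have hformal : d.adjoint.IsFormalAdjoint d := LinearPMap.adjoint_isFormalAdjoint hdense
  -- Kstar ≤ (range d)ᗮ
  have hKsR : Kstar ≤ (LinearMap.range d.toFun)ᗮ := by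
    rintro _ ⟨y, hy, rfl⟩
    rw [Submodule.mem_orthogonal]
    rintro _ ⟨x, rfl⟩
    have h0 : d.adjoint y = 0 := LinearMap.mem_ker.mp hy
    have h1 : ⟪(y : H), d x⟫ = 0 := by rw [← hformal y x, h0, inner_zero_left]
    have h2 : ⟪(d x : H), (y : H)⟫ = 0 := by rw [← inner_conj_symm, h1, map_zero]
    exact h2
  -- (range d)ᗮ ≤ Kstar
  have hRKs : (LinearMap.range d.toFun)ᗮ ≤ Kstar := by
    intro y hy
    rw [Submodule.mem_orthogonal] at hy
    have hinner : ∀ x : d.domain, ⟪(0 : H), (x : H)⟫ = ⟪y, d x⟫ := by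
      intro x
      rw [inner_zero_left, ← inner_conj_symm, hy (d x) ⟨x, rfl⟩, map_zero]
    have hdom : y ∈ d.adjoint.domain :=
      LinearPMap.mem_adjoint_domain_of_exists y ⟨0, hinner⟩
    refine ⟨⟨y, hdom⟩, LinearMap.mem_ker.mpr ?_, rfl⟩
    exact LinearPMap.adjoint_apply_eq hdense ⟨y, hdom⟩ hinner
  -- K ≤ (range d*)ᗮ
  have hKRs : K ≤ (LinearMap.range d.adjoint.toFun)ᗮ := by
    rintro _ ⟨x, hx, rfl⟩
    rw [Submodule.mem_orthogonal]
    rintro _ ⟨y, rfl⟩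
    have h0 : d x = 0 := LinearMap.mem_ker.mp hx
    have h1 : ⟪(d.adjoint y : H), (x : H)⟫ = 0 := by
      rw [hformal y x, h0, inner_zero_right]
    exact h1
  -- range d* ≤ (range d)ᗮ
  have hRA : LinearMap.range d.adjoint.toFun ≤ (LinearMap.range d.toFun)ᗮ := by
    rintro _ ⟨y, rfl⟩
    rw [Submodule.mem_orthogonal]
    rintro _ ⟨x, rfl⟩
    obtain ⟨w, hw, hwx⟩ := hrange ⟨x, rfl⟩
    have h0 : d w = 0 := LinearMap.mem_ker.mp hw
    have h1 : ⟪(d.adjoint y : H), (w : H)⟫ = 0 := by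
      rw [hformal y w, h0, inner_zero_right]
    have h2 : ⟪(w : H), (d.adjoint y : H)⟫ = 0 := by
      rw [← inner_conj_symm, h1, map_zero]
    rw [← hwx]
    exact h2
  -- the graph argument: (range d*)ᗮ ≤ K
  have hGr : (LinearMap.range d.adjoint.toFun)ᗮ ≤ K := by
    intro x hx
    rw [Submodule.mem_orthogonal] at hx
    set e := WithLp.prodContinuousLinearEquiv 2 ℂ H H with he
    set G : Submodule ℂ (WithLp 2 (H × H)) :=
      d.graph.comap e.toLinearEquiv.toLinearMap with hG
    have hGclosed : IsClosed (G : Set (WithLp 2 (H × H))) :=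
      hclosed.preimage e.continuous
    have hGG : Gᗮᗮ = G := by
      rw [Submodule.orthogonal_orthogonal_eq_closure,
        hGclosed.submodule_topologicalClosure_eq]
    have hX : e.symm (x, 0) ∈ Gᗮᗮ := by
      rw [Submodule.mem_orthogonal]
      intro w hw
      rw [Submodule.mem_orthogonal] at hw
      -- for every a in the domain, the graph point pairs to zero with w
      have hwg : ∀ a : d.domain, ⟪(a : H), (e w).1⟫ + ⟪(d a : H), (e w).2⟫ = 0 := by
        intro a
        have hmem : e.symm ((a : H), d a) ∈ G := by
          simp only [hG, Submodule.mem_comap]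
          have h3 : e.toLinearEquiv.toLinearMap (e.symm ((a : H), d a)) = ((a : H), d a) :=
            e.apply_symm_apply _
          rw [h3]
          exact d.mem_graph a
        have h4 := hw _ hmem
        rw [WithLp.prod_inner_apply] at h4
        exact h4
      have hinner : ∀ a : d.domain, ⟪-(e w).1, (a : H)⟫ = ⟪(e w).2, d a⟫ := by
        intro a
        have h1 := hwg a
        rw [inner_neg_left, ← inner_conj_symm ((e w).2) ((d a : H)),
          ← inner_conj_symm ((e w).1) ((a : H))]
        rw [add_comm] at h1
        rw [eq_neg_of_add_eq_zero_left h1, map_neg]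
      have hdom : (e w).2 ∈ d.adjoint.domain :=
        LinearPMap.mem_adjoint_domain_of_exists _ ⟨-(e w).1, hinner⟩
      have hval : d.adjoint ⟨(e w).2, hdom⟩ = -(e w).1 :=
        LinearPMap.adjoint_apply_eq hdense ⟨(e w).2, hdom⟩ hinner
      rw [WithLp.prod_inner_apply]
      have hfst : (e.symm (x, 0)).ofLp.1 = x := rfl
      have hsnd : (e.symm (x, 0)).ofLp.2 = (0 : H) := rfl
      rw [hfst, hsnd, inner_zero_right, add_zero]
      have h5 : (e w).1 = -d.adjoint ⟨(e w).2, hdom⟩ := by rw [hval, neg_neg]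
      have hwfst : w.ofLp.1 = (e w).1 := rfl
      rw [hwfst, h5, inner_neg_left]
      exact neg_eq_zero.mpr (hx _ ⟨⟨(e w).2, hdom⟩, rfl⟩)
    rw [hGG] at hX
    have hgraph : ((x : H), (0 : H)) ∈ d.graph := by
      have h6 : e.toLinearEquiv.toLinearMap (e.symm (x, 0)) = ((x : H), (0 : H)) :=
        e.apply_symm_apply _
      rw [← h6]
      exact hX
    rw [LinearPMap.mem_graph_iff] at hgraph
    obtain ⟨y, hy1, hy2⟩ := hgraph
    exact ⟨y, LinearMap.mem_ker.mpr hy2, hy1⟩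
  -- assemble
  have hRorth : Rᗮ = (LinearMap.range d.toFun)ᗮ := orth_topClosure _
  have hRsorth : Rstarᗮ = (LinearMap.range d.adjoint.toFun)ᗮ := orth_topClosure _
  have h1 : (K ⊓ Kstar) ⟂ R := by
    rw [Submodule.isOrtho_iff_le, hRorth]
    exact le_trans inf_le_right hKsR
  have h2 : (K ⊓ Kstar) ⟂ Rstar := by
    rw [Submodule.isOrtho_iff_le, hRsorth]
    exact le_trans inf_le_left hKRs
  have hRsR : Rstar ≤ Rᗮ := by
    rw [hRorth]
    exact (LinearMap.range d.adjoint.toFun).topologicalClosure_minimal hRA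
      (Submodule.isClosed_orthogonal _)
  have h3 : R ⟂ Rstar := by
    rw [Submodule.isOrtho_iff_le]
    calc R ≤ Rᗮᗮ := Submodule.le_orthogonal_orthogonal _
    _ ≤ Rstarᗮ := Submodule.orthogonal_le hRsR
  refine ⟨h1, h2, h3, ?_⟩
  haveI : CompleteSpace Rstar :=
    (LinearMap.range d.adjoint.toFun).isClosed_topologicalClosure.completeSpace_coe
  have hdecomp : Rstar ⊔ Rstarᗮ ⊓ Rᗮ = Rᗮ :=
    Submodule.sup_orthogonal_inf_of_hasOrthogonalProjection hRsR
  have htop : Rᗮ ⊔ Rᗮᗮ = ⊤ := Submodule.sup_orthogonal_of_hasOrthogonalProjection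
  have hRclosed : Rᗮᗮ = R := by
    rw [Submodule.orthogonal_orthogonal_eq_closure,
      (LinearMap.range d.toFun).isClosed_topologicalClosure.submodule_topologicalClosure_eq]
  rw [eq_top_iff, ← htop, hRclosed]
  refine sup_le ?_ ?_
  · rw [← hdecomp]
    refine sup_le ?_ ?_
    · exact le_sup_right
    · have hsub : Rstarᗮ ⊓ Rᗮ ≤ K ⊓ Kstar := by
        refine le_inf ?_ ?_
        · rw [hRsorth]; exact le_trans inf_le_left hGr
        · rw [hRorth]; exact le_trans inf_le_right hRKs
      exact le_trans hsub (le_trans le_sup_left le_sup_left)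
  · exact le_trans le_sup_right le_sup_left
end

section
/- Let d be a closed densely defined operator on a Hilbert space H with range(d) ⊆ ker(d). If the quotient vector space ker(d)/range(d) is finite dimensional, then range(d) is a closed subspace of H, and consequently ker(d)/range(d) is isomorphic to the harmonic space ker d ∩ ker d*. -/
open Submodule

/-- A bounded operator between Banach spaces whose range has finite codimension
has closed range. -/
lemma closed_range_of_finite_codim {X Y : Type*} [NormedAddCommGroup X] [NormedSpace ℂ X]
    [CompleteSpace X] [NormedAddCommGroup Y] [NormedSpace ℂ Y] [CompleteSpace Y]
    (T : X →L[ℂ] Y) (hfin : FiniteDimensional ℂ (Y ⧸ LinearMap.range (T : X →ₗ[ℂ] Y))) :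
    IsClosed ((LinearMap.range (T : X →ₗ[ℂ] Y) : Submodule ℂ Y) : Set Y) := by
  set R := LinearMap.range (T : X →ₗ[ℂ] Y) with hR
  obtain ⟨F, hF⟩ := R.exists_isCompl
  haveI : FiniteDimensional ℂ F := (quotientEquivOfIsCompl R F hF).finiteDimensional
  haveI : CompleteSpace F := FiniteDimensional.complete ℂ F
  set S : X × F →L[ℂ] Y :=
    T.comp (ContinuousLinearMap.fst ℂ X F) + F.subtypeL.comp (ContinuousLinearMap.snd ℂ X F)
    with hS
  have hSapp : ∀ p : X × F, S p = T p.1 + (p.2 : Y) := fun p => rfl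
  have hsurj : Function.Surjective S := by
    intro y
    have hy : y ∈ R ⊔ F := by rw [hF.sup_eq_top]; trivial
    obtain ⟨r, hr, f, hf, hrf⟩ := Submodule.mem_sup.mp hy
    obtain ⟨x, hx⟩ := hr
    exact ⟨(x, ⟨f, hf⟩), by simp only [ContinuousLinearMap.coe_coe] at hx; simp [hSapp, hx, hrf]⟩
  have hopen : IsOpenMap S := S.isOpenMap hsurj
  have hquot : Topology.IsQuotientMap S := hopen.isQuotientMap S.continuous hsurj
  have hpre : S ⁻¹' (R : Set Y) = {p : X × F | (p.2 : Y) = 0} := by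
    ext ⟨x, f⟩
    simp only [Set.mem_preimage, SetLike.mem_coe, Set.mem_setOf_eq, hSapp]
    constructor
    · intro h
      have hfR : (f : Y) ∈ R := by
        have : (f : Y) = (T x + (f : Y)) - T x := by abel
        rw [this]
        exact R.sub_mem h (LinearMap.mem_range_self (T : X →ₗ[ℂ] Y) x)
      exact (Submodule.mem_bot ℂ).mp (hF.disjoint.le_bot ⟨hfR, f.2⟩)
    · intro h
      rw [h, add_zero]
      exact LinearMap.mem_range_self (T : X →ₗ[ℂ] Y) x
  have hclosedpre : IsClosed (S ⁻¹' (R : Set Y)) := by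
    rw [hpre]
    exact isClosed_eq (continuous_subtype_val.comp continuous_snd) continuous_const
  exact (hquot.isClosed_preimage (s := (R : Set Y))).mp hclosedpre

/-- If `d` is a closed densely defined operator on a Hilbert space with
`range d ⊆ ker d`, and the L²-cohomology `ker d / range d` is finite
dimensional, then `range d` is closed, and consequently `ker d / range d` is
isomorphic to the harmonic space `ker d ∩ ker d*`. -/
theorem finite_dim_cohomology_implies_closed_range
    {H : Type*} [NormedAddCommGroup H] [InnerProductSpace ℂ H] [CompleteSpace H]
    (d : H →ₗ.[ℂ] H) (hdense : Dense (d.domain : Set H)) (hclosed : d.IsClosed)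
    (hrange : LinearMap.range d.toFun ≤
      (LinearMap.ker d.toFun).map d.domain.subtype)
    (hfin : FiniteDimensional ℂ
      (((LinearMap.ker d.toFun).map d.domain.subtype) ⧸
        ((LinearMap.range d.toFun).comap
          ((LinearMap.ker d.toFun).map d.domain.subtype).subtype))) :
    IsClosed ((LinearMap.range d.toFun : Submodule ℂ H) : Set H) ∧
      Nonempty
        ((((LinearMap.ker d.toFun).map d.domain.subtype) ⧸
            ((LinearMap.range d.toFun).comap
              ((LinearMap.ker d.toFun).map d.domain.subtype).subtype)) ≃ₗ[ℂ]
          ↥(((LinearMap.ker d.toFun).map d.domain.subtype) ⊓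
            ((LinearMap.ker d.adjoint.toFun).map d.adjoint.domain.subtype))) := by
  classical
  set K : Submodule ℂ H := (LinearMap.ker d.toFun).map d.domain.subtype with hK
  set R : Submodule ℂ H := LinearMap.range d.toFun with hRdef
  set R' : Submodule ℂ K := R.comap K.subtype with hR'def
  -- `K = ker d` is closed since `d` is a closed operator
  have hKc : IsClosed (K : Set H) := by
    have hset : (K : Set H) = (fun x : H => (x, (0 : H))) ⁻¹' (d.graph : Set (H × H)) := by
      ext x
      simp only [Set.mem_preimage, SetLike.mem_coe, LinearPMap.mem_graph_iff, hK,
        Submodule.mem_map, LinearMap.mem_ker, Submodule.coe_subtype]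
      constructor
      · rintro ⟨y, hy, rfl⟩
        exact ⟨y, rfl, hy⟩
      · rintro ⟨y, hy1, hy2⟩
        exact ⟨y, hy2, hy1⟩
    rw [hset]
    exact hclosed.preimage (continuous_id.prodMk continuous_const)
  haveI : CompleteSpace K := hKc.completeSpace_coe
  haveI : CompleteSpace d.graph := hclosed.completeSpace_coe
  -- the bounded operator `graph d → K`, `(x, dx) ↦ dx`
  have hmem : ∀ g : d.graph, ((ContinuousLinearMap.snd ℂ H H).comp d.graph.subtypeL) g ∈ K := by
    rintro ⟨⟨a, b⟩, hg⟩
    rcases (LinearPMap.mem_graph_iff d).mp hg with ⟨y, hy1, hy2⟩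
    exact hrange ⟨y, hy2⟩
  set T : d.graph →L[ℂ] K :=
    ContinuousLinearMap.codRestrict ((ContinuousLinearMap.snd ℂ H H).comp d.graph.subtypeL) K hmem
    with hT
  have hrangeT : LinearMap.range (T : d.graph →ₗ[ℂ] K) = R' := by
    ext z
    constructor
    · rintro ⟨g, rfl⟩
      rcases (LinearPMap.mem_graph_iff d).mp g.2 with ⟨y, hy1, hy2⟩
      show ((g : H × H)).2 ∈ R
      exact ⟨y, hy2⟩
    · intro hz
      obtain ⟨u, hu⟩ := hz
      exact ⟨⟨(↑u, d.toFun u), d.mem_graph u⟩, Subtype.ext hu⟩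
  have hfin' : FiniteDimensional ℂ (K ⧸ LinearMap.range (T : d.graph →ₗ[ℂ] K)) := by rwa [hrangeT]
  have hR'c : IsClosed (R' : Set K) := by
    have h := closed_range_of_finite_codim T hfin'
    rwa [hrangeT] at h
  -- transfer closedness to `H`
  have hRc : IsClosed ((R : Submodule ℂ H) : Set H) := by
    have himg : (Subtype.val '' (R' : Set K)) = (R : Set H) := by
      ext y
      constructor
      · rintro ⟨z, hz, rfl⟩; exact hz
      · intro hy; exact ⟨⟨y, hrange hy⟩, hy, rfl⟩
    rw [← himg]
    exact hKc.isClosedEmbedding_subtypeVal.isClosedMap _ hR'c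
  refine ⟨hRc, ?_⟩
  -- the harmonic space
  haveI : CompleteSpace R' := hR'c.completeSpace_coe
  have hcompl : IsCompl R' R'ᗮ := Submodule.isCompl_orthogonal_of_hasOrthogonalProjection
  let e1 := Submodule.quotientEquivOfIsCompl R' R'ᗮ hcompl
  set Ks : Submodule ℂ H := (LinearMap.ker d.adjoint.toFun).map d.adjoint.domain.subtype with hKs
  -- `ker d† = (range d)ᗮ`
  have hKstar : Ks = Rᗮ := by
    ext x
    simp only [hKs, Submodule.mem_map, LinearMap.mem_ker, Submodule.mem_orthogonal,
      Submodule.coe_subtype]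
    constructor
    · rintro ⟨y, hy0, rfl⟩
      intro u hu
      obtain ⟨v, hv⟩ := hu
      have h1 := LinearPMap.adjoint_isFormalAdjoint hdense y v
      have h0 : d.adjoint y = 0 := hy0
      rw [h0, inner_zero_left] at h1
      have hv' : d v = u := hv
      rw [← hv', ← inner_conj_symm, ← h1, map_zero]
    · intro hx
      have key : ∀ v : d.domain, (inner ℂ (0 : H) (v : H) : ℂ) = inner ℂ x (d v) := by
        intro v
        rw [inner_zero_left]
        have h2 : (inner ℂ (d v) x : ℂ) = 0 := hx _ ⟨v, rfl⟩
        rw [← inner_conj_symm, h2, map_zero]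
      have hmemadj : x ∈ d.adjoint.domain :=
        LinearPMap.mem_adjoint_domain_of_exists x ⟨0, key⟩
      exact ⟨⟨x, hmemadj⟩, LinearPMap.adjoint_apply_eq hdense _ key, rfl⟩
  -- orthogonal complement of the range inside `K` is the harmonic space
  have horth : (R'ᗮ : Submodule ℂ K) = (K ⊓ Ks).comap K.subtype := by
    ext z
    rw [Submodule.mem_orthogonal, Submodule.mem_comap, Submodule.mem_inf, hKstar,
      Submodule.mem_orthogonal]
    constructor
    · intro h
      refine ⟨z.2, ?_⟩
      intro u hu
      have h1 := h ⟨u, hrange hu⟩ hu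
      rw [Submodule.coe_inner] at h1
      exact h1
    · rintro ⟨-, h⟩
      intro u hu
      rw [Submodule.coe_inner]
      exact h u hu
  let e2 : (R'ᗮ : Submodule ℂ K) ≃ₗ[ℂ] ↥(K ⊓ Ks) :=
    (LinearEquiv.ofEq _ _ horth).trans (Submodule.comapSubtypeEquivOfLe inf_le_left)
  exact ⟨e1.trans e2⟩
end
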